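/- arXiv:math/0512181 — 2 statements merged into one kernel-verified Lean document; each statement's English description precedes it below -/
import Mathlib

section
/- The (2m+p)×(2m+p) block matrix A = [[0, Ω, G], [Ω, −Ω, 0], [Gᵀ, 0, 0]] (with blocks of sizes m, m, p) is invertible, and its inverse is the block matrix [[P, P, Hᵀ], [P, P − Ω⁻¹, Hᵀ], [H, H, −Σ]]. -/
open Matrix

theorem block_three_by_three_inverse (m p : ℕ) (hm : 0 < m) (hp : 0 < p)
    (Ω : Matrix (Fin m) (Fin m) ℝ) (hΩ : Ω.PosDef)
    (G : Matrix (Fin m) (Fin p) ℝ)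
    (hG : IsUnit (Gᵀ * Ω⁻¹ * G))
    (S : Matrix (Fin p) (Fin p) ℝ) (hS : S = (Gᵀ * Ω⁻¹ * G)⁻¹)
    (H : Matrix (Fin p) (Fin m) ℝ) (hH : H = S * Gᵀ * Ω⁻¹)
    (P : Matrix (Fin m) (Fin m) ℝ)
    (hP : P = Ω⁻¹ - Ω⁻¹ * G * S * Gᵀ * Ω⁻¹)
    (A : Matrix (Fin m ⊕ (Fin m ⊕ Fin p)) (Fin m ⊕ (Fin m ⊕ Fin p)) ℝ)
    (hA : A = fromBlocks 0 (fromCols Ω G) (fromRows Ω Gᵀ)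
      (fromBlocks (-Ω) 0 0 0)) :
    IsUnit A ∧
      A⁻¹ = fromBlocks P (fromCols P Hᵀ) (fromRows P H)
        (fromBlocks (P - Ω⁻¹) Hᵀ H (-S)) := by
  -- Basic facts about Ω
  have hΩdet : IsUnit Ω.det := isUnit_iff_ne_zero.mpr (ne_of_gt hΩ.det_pos)
  have hΩ1 : Ω * Ω⁻¹ = 1 := mul_nonsing_inv Ω hΩdet
  have hΩ2 : Ω⁻¹ * Ω = 1 := nonsing_inv_mul Ω hΩdet
  have hΩsym : Ωᵀ = Ω := by
    have := hΩ.isHermitian.eq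
    rwa [conjTranspose_eq_transpose_of_trivial] at this
  have hΩinvsym : (Ω⁻¹)ᵀ = Ω⁻¹ := by
    rw [transpose_nonsing_inv, hΩsym]
  -- S is the two-sided inverse of Gᵀ Ω⁻¹ G
  have hSdet : IsUnit (Gᵀ * Ω⁻¹ * G).det := (isUnit_iff_isUnit_det _).mp hG
  have hS1 : (Gᵀ * Ω⁻¹ * G) * S = 1 := by rw [hS]; exact mul_nonsing_inv _ hSdet
  have hS2 : S * (Gᵀ * Ω⁻¹ * G) = 1 := by rw [hS]; exact nonsing_inv_mul _ hSdet
  have hSsym : Sᵀ = S := by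
    rw [hS, transpose_nonsing_inv]
    congr 1
    rw [transpose_mul, transpose_mul, hΩinvsym, transpose_transpose,
      Matrix.mul_assoc]
  have hHT : Hᵀ = Ω⁻¹ * G * S := by
    rw [hH, transpose_mul, transpose_mul, hΩinvsym, hSsym, transpose_transpose,
      Matrix.mul_assoc]
  -- key block identities
  have l1 : Ω * P + G * H = 1 := by
    rw [hP, hH, Matrix.mul_sub]
    rw [show Ω * (Ω⁻¹ * G * S * Gᵀ * Ω⁻¹) = Ω * Ω⁻¹ * (G * (S * Gᵀ * Ω⁻¹)) by
      simp [Matrix.mul_assoc], hΩ1, Matrix.one_mul, Matrix.mul_assoc]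
    abel_nf
  have l2 : Ω * (P - Ω⁻¹) + G * H = 0 := by
    rw [Matrix.mul_sub, hΩ1, sub_add_eq_add_sub, l1, sub_self]
  have l3 : Ω * Hᵀ + G * (-S) = 0 := by
    rw [hHT, ← Matrix.mul_assoc, ← Matrix.mul_assoc, hΩ1, Matrix.one_mul,
      Matrix.mul_neg, add_neg_cancel]
  have l4 : Gᵀ * P = 0 := by
    rw [hP, Matrix.mul_sub]
    rw [show Gᵀ * (Ω⁻¹ * G * S * Gᵀ * Ω⁻¹) = (Gᵀ * Ω⁻¹ * G * S) * (Gᵀ * Ω⁻¹) by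
      simp [Matrix.mul_assoc], hS1, Matrix.one_mul, sub_self]
  have l5 : Gᵀ * Hᵀ = 1 := by
    rw [hHT, show Gᵀ * (Ω⁻¹ * G * S) = Gᵀ * Ω⁻¹ * G * S by simp [Matrix.mul_assoc],
      hS1]
  -- the right inverse computation
  have key : A * fromBlocks P (fromCols P Hᵀ) (fromRows P H)
      (fromBlocks (P - Ω⁻¹) Hᵀ H (-S)) = 1 := by
    have frAdd : ∀ (a c : Matrix (Fin m) (Fin m) ℝ) (b d : Matrix (Fin p) (Fin m) ℝ),
        fromRows a b + fromRows c d = fromRows (a + c) (b + d) := by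
      intro a c b d
      ext (_ | _) _ <;> simp [fromRows_apply_inl, fromRows_apply_inr]
    rw [hA, fromBlocks_multiply, fromCols_mul_fromRows,
      fromCols_mul_fromBlocks, fromRows_mul, fromBlocks_mul_fromRows,
      fromRows_mul_fromCols, fromBlocks_multiply, fromBlocks_add, frAdd, ← fromBlocks_one]
    simp only [Matrix.zero_mul, Matrix.mul_zero, zero_add, add_zero,
      Matrix.neg_mul, l1, l2, l3, l4, l5]
    rw [add_neg_cancel, fromRows_zero, fromCols_zero,
      show Ω * P + -(Ω * (P - Ω⁻¹)) = Ω * Ω⁻¹ by rw [Matrix.mul_sub]; abel,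
      hΩ1, add_neg_cancel, fromBlocks_one]
  exact ⟨(isUnit_iff_isUnit_det A).mpr (isUnit_det_of_right_inverse key),
    inv_eq_right_inv key⟩
end

section
/- The (1+2m+p)×(1+2m+p) block matrix Φ = [[−1, 0, 0, 0], [0, 0, Ω, G], [0, Ω, −Ω, 0], [0, Gᵀ, 0, 0]] (with blocks of sizes 1, m, m, p) is invertible, and its inverse is the block matrix [[−1, 0, 0, 0], [0, P, P, Hᵀ], [0, P, P − Ω⁻¹, Hᵀ], [0, H, H, −Σ]]. -/
open Matrix

lemma myFromRows_add {R m₁ m₂ n : Type*} [AddCommMonoid R] (A₁ B₁ : Matrix m₁ n R)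
    (A₂ B₂ : Matrix m₂ n R) :
    fromRows A₁ A₂ + fromRows B₁ B₂ = fromRows (A₁ + B₁) (A₂ + B₂) := by
  ext (i | i) j <;> simp

theorem block_four_by_four_inverse (m p : ℕ) (hm : 0 < m) (hp : 0 < p)
    (Ω : Matrix (Fin m) (Fin m) ℝ) (hΩ : Ω.PosDef)
    (G : Matrix (Fin m) (Fin p) ℝ)
    (hG : IsUnit (Gᵀ * Ω⁻¹ * G))
    (S : Matrix (Fin p) (Fin p) ℝ) (hS : S = (Gᵀ * Ω⁻¹ * G)⁻¹)
    (H : Matrix (Fin p) (Fin m) ℝ) (hH : H = S * Gᵀ * Ω⁻¹)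
    (P : Matrix (Fin m) (Fin m) ℝ)
    (hP : P = Ω⁻¹ - Ω⁻¹ * G * S * Gᵀ * Ω⁻¹)
    (Φ : Matrix (Fin 1 ⊕ (Fin m ⊕ (Fin m ⊕ Fin p)))
      (Fin 1 ⊕ (Fin m ⊕ (Fin m ⊕ Fin p))) ℝ)
    (hΦ : Φ = fromBlocks (-1) 0 0
      (fromBlocks 0 (fromCols Ω G) (fromRows Ω Gᵀ)
        (fromBlocks (-Ω) 0 0 0))) :
    IsUnit Φ ∧
      Φ⁻¹ = fromBlocks (-1) 0 0
        (fromBlocks P (fromCols P Hᵀ) (fromRows P H)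
          (fromBlocks (P - Ω⁻¹) Hᵀ H (-S))) := by
  have hΩd : IsUnit Ω.det := (isUnit_iff_isUnit_det Ω).mp hΩ.isUnit
  have h1 : Ω * Ω⁻¹ = 1 := mul_nonsing_inv Ω hΩd
  have hsym : Ωᵀ = Ω := hΩ.isHermitian.eq
  have hsymi : (Ω⁻¹)ᵀ = Ω⁻¹ := by rw [transpose_nonsing_inv, hsym]
  have hGd : IsUnit (Gᵀ * Ω⁻¹ * G).det := (isUnit_iff_isUnit_det _).mp hG
  have hS2 : Gᵀ * Ω⁻¹ * G * S = 1 := by rw [hS]; exact mul_nonsing_inv _ hGd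
  have htr : (Gᵀ * Ω⁻¹ * G)ᵀ = Gᵀ * Ω⁻¹ * G := by
    rw [transpose_mul, transpose_mul, transpose_transpose, hsymi, Matrix.mul_assoc]
  have hSsym : Sᵀ = S := by rw [hS, transpose_nonsing_inv, htr]
  have hHT : Hᵀ = Ω⁻¹ * G * S := by
    rw [hH, transpose_mul, transpose_mul, transpose_transpose, hsymi, hSsym,
      Matrix.mul_assoc]
  have k1 : Ω * P + G * H = 1 := by
    rw [hP, hH, Matrix.mul_sub]
    simp only [← Matrix.mul_assoc, h1, Matrix.one_mul]
    abel
  have k2 : Ω * (P - Ω⁻¹) + G * H = 0 := by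
    rw [Matrix.mul_sub, h1, sub_add_eq_add_sub, k1, sub_self]
  have k3 : Ω * Hᵀ + G * (-S) = 0 := by
    rw [hHT, Matrix.mul_neg]
    simp only [← Matrix.mul_assoc, h1, Matrix.one_mul]
    abel
  have k4 : Gᵀ * P = 0 := by
    rw [hP, Matrix.mul_sub]
    simp only [← Matrix.mul_assoc, hS2, Matrix.one_mul, sub_self]
  have k5 : Gᵀ * Hᵀ = 1 := by
    rw [hHT]
    simp only [← Matrix.mul_assoc, hS2]
  have key : Φ * fromBlocks (-1) 0 0
      (fromBlocks P (fromCols P Hᵀ) (fromRows P H)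
        (fromBlocks (P - Ω⁻¹) Hᵀ H (-S))) = 1 := by
    rw [hΦ, fromBlocks_multiply, fromBlocks_multiply,
      fromCols_mul_fromRows, fromCols_mul_fromBlocks,
      fromRows_mul, fromBlocks_mul_fromRows, fromRows_mul_fromCols,
      fromBlocks_multiply, myFromRows_add, fromBlocks_add]
    simp only [Matrix.zero_mul, Matrix.mul_zero, add_zero, zero_add,
      neg_mul_neg, Matrix.one_mul, Matrix.mul_one, Matrix.neg_mul,
      k1, k2, k3, k4, k5, fromCols_zero]
    rw [show Ω * P + -(Ω * P) = 0 from by abel, fromRows_zero,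
      show Ω * P + -(Ω * (P - Ω⁻¹)) = 1 from by
        rw [Matrix.mul_sub, h1]; abel,
      show Ω * Hᵀ + -(Ω * Hᵀ) = 0 from by abel]
    simp [fromBlocks_one]
  have hud : IsUnit Φ.det := IsUnit.of_mul_eq_one _ (by rw [← det_mul, key, det_one])
  exact ⟨(isUnit_iff_isUnit_det Φ).mpr hud, inv_eq_right_inv key⟩
end
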